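/- Let X be a complex Banach space, let f : ℝⁿ → X be bounded, continuous and Levitan N-almost periodic, and let h ∈ L¹(ℝⁿ). Then the convolution H(t) := ∫_{ℝⁿ} h(t−s) f(s) ds is bounded, continuous and Levitan N-almost periodic. -/

import Mathlib

open MeasureTheory Filter Topology

/-- A set `E ⊆ ℝⁿ` is relatively dense if there is `l > 0` such that every closed
ball of radius `l` meets `E`. -/
def RelativelyDense {n : ℕ} (E : Set (EuclideanSpace ℝ (Fin n))) : Prop :=
  ∃ l > (0 : ℝ), ∀ x : EuclideanSpace ℝ (Fin n), ∃ τ ∈ E, ‖τ - x‖ ≤ l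

/-- The set `E(ε, N)` of all `(ε, N)`-almost periods of `F`. -/
def AlmostPeriodSet {n : ℕ} {X : Type*} [NormedAddCommGroup X]
    (F : EuclideanSpace ℝ (Fin n) → X) (ε N : ℝ) : Set (EuclideanSpace ℝ (Fin n)) :=
  {τ | ∀ t, ‖t‖ ≤ N → ‖F (t + τ) - F t‖ ≤ ε}

/-- `F` is Levitan pre-almost periodic: `E(ε, N)` is relatively dense for all `ε, N > 0`. -/
def LevitanPreAP {n : ℕ} {X : Type*} [NormedAddCommGroup X]
    (F : EuclideanSpace ℝ (Fin n) → X) : Prop :=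
  ∀ ε > (0 : ℝ), ∀ N > (0 : ℝ), RelativelyDense (AlmostPeriodSet F ε N)

/-- `F` is Levitan `N`-almost periodic. -/
def LevitanNAP {n : ℕ} {X : Type*} [NormedAddCommGroup X]
    (F : EuclideanSpace ℝ (Fin n) → X) : Prop :=
  LevitanPreAP F ∧
    ∀ N > (0 : ℝ), ∀ ε > (0 : ℝ), ∃ η > (0 : ℝ),
      ∃ E : Set (EuclideanSpace ℝ (Fin n)), RelativelyDense E ∧
        E ⊆ AlmostPeriodSet F η N ∧
        ∀ a ∈ E, ∀ b ∈ E, a + b ∈ AlmostPeriodSet F ε N ∧ a - b ∈ AlmostPeriodSet F ε N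

/- ### Auxiliary lemmas -/

lemma stmt7_APmono {n : ℕ} {X : Type*} [NormedAddCommGroup X]
    {F : EuclideanSpace ℝ (Fin n) → X} {ε₁ ε₂ N : ℝ} (hε : ε₁ ≤ ε₂) :
    AlmostPeriodSet F ε₁ N ⊆ AlmostPeriodSet F ε₂ N :=
  fun _ hτ t ht => (hτ t ht).trans hε

lemma stmt7_RDmono {n : ℕ} {E E' : Set (EuclideanSpace ℝ (Fin n))} (hEE : E ⊆ E')
    (hE : RelativelyDense E) : RelativelyDense E' := by
  obtain ⟨l, hl, hl'⟩ := hE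
  exact ⟨l, hl, fun x => by obtain ⟨τ, hτ, h⟩ := hl' x; exact ⟨τ, hEE hτ, h⟩⟩

lemma stmt7_tail {n : ℕ} {h : EuclideanSpace ℝ (Fin n) → ℂ} (hh : Integrable h)
    {δ : ℝ} (hδ : 0 < δ) :
    ∃ R > (0:ℝ), ∫ u in (Metric.closedBall (0:EuclideanSpace ℝ (Fin n)) R)ᶜ, ‖h u‖ ≤ δ := by
  have hmono : Monotone (fun k : ℕ => Metric.closedBall (0:EuclideanSpace ℝ (Fin n)) k) := by
    intro a b hab
    exact Metric.closedBall_subset_closedBall (by exact_mod_cast hab)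
  have hunion : ⋃ k : ℕ, Metric.closedBall (0:EuclideanSpace ℝ (Fin n)) k = Set.univ := by
    ext x
    simp only [Set.mem_iUnion, Set.mem_univ, iff_true, Metric.mem_closedBall,
      dist_zero_right]
    exact exists_nat_ge ‖x‖
  have htend := tendsto_setIntegral_of_monotone
    (fun k : ℕ => measurableSet_closedBall) hmono hh.norm.integrableOn
  rw [hunion, setIntegral_univ] at htend
  have : ∀ᶠ k : ℕ in atTop,
      |(∫ u in Metric.closedBall (0:EuclideanSpace ℝ (Fin n)) k, ‖h u‖) - ∫ u, ‖h u‖| < δ := by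
    obtain ⟨K, hK⟩ := Metric.tendsto_atTop.mp htend δ hδ
    filter_upwards [eventually_ge_atTop K] with k hk
    simpa [Real.dist_eq] using hK k hk
  obtain ⟨k, hk⟩ := (this.and (eventually_ge_atTop 1)).exists
  refine ⟨k, by exact_mod_cast hk.2, ?_⟩
  have hsplit : (∫ u in Metric.closedBall (0:EuclideanSpace ℝ (Fin n)) k, ‖h u‖)
      + ∫ u in (Metric.closedBall (0:EuclideanSpace ℝ (Fin n)) (k:ℝ))ᶜ, ‖h u‖ = ∫ u, ‖h u‖ :=
    integral_add_compl measurableSet_closedBall hh.norm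
  have := abs_lt.mp hk.1
  linarith [this.1, this.2]

section aux
variable {n : ℕ} {X : Type*} [NormedAddCommGroup X] [NormedSpace ℂ X] [CompleteSpace X]
  {f : EuclideanSpace ℝ (Fin n) → X} {h : EuclideanSpace ℝ (Fin n) → ℂ}

lemma stmt7_integrable (hfc : Continuous f) (hh : Integrable h) {C : ℝ}
    (hC : ∀ s, ‖f s‖ ≤ C) (t : EuclideanSpace ℝ (Fin n)) :
    Integrable (fun u => h u • f (t - u)) := by
  refine Integrable.mono' (hh.norm.mul_const C) ?_ ?_
  · exact hh.aestronglyMeasurable.smul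
      ((hfc.comp (continuous_const.sub continuous_id)).aestronglyMeasurable)
  · filter_upwards with u
    rw [norm_smul]
    exact mul_le_mul_of_nonneg_left (hC _) (norm_nonneg _)

omit [CompleteSpace X] in
lemma stmt7_swap (t : EuclideanSpace ℝ (Fin n)) :
    ∫ s, h (t - s) • f s = ∫ u, h u • f (t - u) := by
  rw [← integral_sub_left_eq_self (fun u => h u • f (t - u)) volume t]
  simp

lemma stmt7_key (hfc : Continuous f) (hh : Integrable h) {C : ℝ} (hC : ∀ s, ‖f s‖ ≤ C)
    {η N R δ' : ℝ} (hη : 0 ≤ η) (hC0 : 0 ≤ C)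
    (hδ' : ∫ u in (Metric.closedBall (0:EuclideanSpace ℝ (Fin n)) R)ᶜ, ‖h u‖ ≤ δ')
    {τ : EuclideanSpace ℝ (Fin n)} (hτ : τ ∈ AlmostPeriodSet f η (N + R)) :
    τ ∈ AlmostPeriodSet (fun t => ∫ u, h u • f (t - u)) (η * (∫ u, ‖h u‖) + 2 * C * δ') N := by
  have hint := stmt7_integrable hfc hh hC
  intro t ht
  simp only
  rw [← integral_sub (hint (t + τ)) (hint t)]
  set B := Metric.closedBall (0:EuclideanSpace ℝ (Fin n)) R with hB
  set φ : EuclideanSpace ℝ (Fin n) → ℝ :=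
    fun u => η * ‖h u‖ + 2 * C * Set.indicator Bᶜ (fun u => ‖h u‖) u with hφ
  have hφint : Integrable φ := by
    refine (hh.norm.const_mul η).add ((Integrable.const_mul ?_ (2 * C)))
    exact (hh.norm.integrableOn (s := Bᶜ)).integrable_indicator
      measurableSet_closedBall.compl
  have hbound : ∀ u, ‖h u • f (t + τ - u) - h u • f (t - u)‖ ≤ φ u := by
    intro u
    rw [← smul_sub, norm_smul]
    by_cases hu : u ∈ B
    · have hnu : ‖t - u‖ ≤ N + R := by
        have : ‖u‖ ≤ R := by simpa [hB, dist_zero_right] using hu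
        calc ‖t - u‖ ≤ ‖t‖ + ‖u‖ := norm_sub_le _ _
          _ ≤ N + R := add_le_add ht this
      have := hτ (t - u) hnu
      have h1 : ‖f (t + τ - u) - f (t - u)‖ ≤ η := by
        have e : t - u + τ = t + τ - u := by abel
        rwa [e] at this
      have : ‖h u‖ * ‖f (t + τ - u) - f (t - u)‖ ≤ ‖h u‖ * η :=
        mul_le_mul_of_nonneg_left h1 (norm_nonneg _)
      have hind : Set.indicator Bᶜ (fun u => ‖h u‖) u = 0 :=
        Set.indicator_of_notMem (by simpa using hu) _
      rw [hφ]
      simp only [hind, mul_zero, add_zero]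
      linarith [this]
    · have h2 : ‖f (t + τ - u) - f (t - u)‖ ≤ 2 * C := by
        calc ‖f (t + τ - u) - f (t - u)‖ ≤ ‖f (t + τ - u)‖ + ‖f (t - u)‖ := norm_sub_le _ _
          _ ≤ C + C := add_le_add (hC _) (hC _)
          _ = 2 * C := by ring
      have hind : Set.indicator Bᶜ (fun u => ‖h u‖) u = ‖h u‖ :=
        Set.indicator_of_mem (by simpa using hu) _
      rw [hφ]
      simp only [hind]
      nlinarith [norm_nonneg (h u), mul_le_mul_of_nonneg_left h2 (norm_nonneg (h u)),
        mul_nonneg hη (norm_nonneg (h u))]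
  calc ‖∫ u, (h u • f (t + τ - u) - h u • f (t - u))‖ ≤ ∫ u, φ u :=
        norm_integral_le_of_norm_le hφint (Eventually.of_forall hbound)
    _ ≤ η * (∫ u, ‖h u‖) + 2 * C * δ' := by
        rw [hφ, integral_add (hh.norm.const_mul η) (Integrable.const_mul
          ((hh.norm.integrableOn (s := Bᶜ)).integrable_indicator
            measurableSet_closedBall.compl) _),
          integral_const_mul, integral_const_mul, integral_indicator
            measurableSet_closedBall.compl]
        exact add_le_add_right (mul_le_mul_of_nonneg_left hδ'
          (by positivity)) _

lemma stmt7_cont (hfc : Continuous f) (hh : Integrable h) {C : ℝ} (hC : ∀ s, ‖f s‖ ≤ C) :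
    Continuous (fun t => ∫ u, h u • f (t - u)) := by
  have : (fun t => ∫ u, h u • f (t - u)) =
      MeasureTheory.convolution h f (ContinuousLinearMap.lsmul ℂ ℂ) volume := by
    funext t
    simp [MeasureTheory.convolution]
  rw [this]
  exact BddAbove.continuous_convolution_right_of_integrable _
    ⟨C, by rintro x ⟨s, rfl⟩; exact hC s⟩ hh hfc

end aux

/-- Convolution with an `L¹(ℝⁿ)` kernel preserves bounded, continuous, Levitan
`N`-almost periodic functions. -/
theorem stmt7 {X : Type*} [NormedAddCommGroup X] [NormedSpace ℂ X] [CompleteSpace X]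
    (n : ℕ) (f : EuclideanSpace ℝ (Fin n) → X) (hfc : Continuous f)
    (hfb : ∃ C, ∀ s, ‖f s‖ ≤ C) (hfap : LevitanNAP f)
    (h : EuclideanSpace ℝ (Fin n) → ℂ) (hh : Integrable h) :
    (∃ C, ∀ t, ‖∫ s, h (t - s) • f s‖ ≤ C) ∧
    Continuous (fun t => ∫ s, h (t - s) • f s) ∧
    LevitanNAP (fun t => ∫ s, h (t - s) • f s) := by
  obtain ⟨C₀, hC₀⟩ := hfb
  set C : ℝ := max C₀ 0 with hCdef
  have hC : ∀ s, ‖f s‖ ≤ C := fun s => (hC₀ s).trans (le_max_left _ _)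
  have hC0 : 0 ≤ C := le_max_right _ _
  have Heq : ∀ t : EuclideanSpace ℝ (Fin n), ∫ s, h (t - s) • f s = ∫ u, h u • f (t - u) :=
    fun t => stmt7_swap t
  set I : ℝ := ∫ u, ‖h u‖ with hIdef
  have hI0 : 0 ≤ I := integral_nonneg fun u => norm_nonneg _
  simp only [Heq]
  refine ⟨⟨C * I, fun t => ?_⟩, stmt7_cont hfc hh hC, ?_, ?_⟩
  · calc ‖∫ u, h u • f (t - u)‖ ≤ ∫ u, ‖h u‖ * C :=
          norm_integral_le_of_norm_le (hh.norm.mul_const C) (Eventually.of_forall fun u => by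
            rw [norm_smul]; exact mul_le_mul_of_nonneg_left (hC _) (norm_nonneg _))
      _ = C * I := by rw [hIdef, ← integral_const_mul]; congr 1; ext u; ring
  · -- LevitanPreAP
    intro ε hε N hN
    set δ' : ℝ := ε / (2 * (2 * C + 1)) with hδ'def
    have hδ'pos : 0 < δ' := by positivity
    obtain ⟨R, hR, htail⟩ := stmt7_tail hh hδ'pos
    set η : ℝ := ε / (2 * (I + 1)) with hηdef
    have hηpos : 0 < η := by positivity
    have hkey : η * I + 2 * C * δ' ≤ ε := by
      have e1 : η * (I + 1) = ε / 2 := by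
        rw [hηdef]; field_simp
      have e2 : δ' * (2 * C + 1) = ε / 2 := by
        rw [hδ'def]; field_simp
      nlinarith [hηpos.le, hδ'pos.le]
    have hrd := hfap.1 η hηpos (N + R) (by linarith)
    exact stmt7_RDmono
      (fun τ hτ => stmt7_APmono hkey (stmt7_key hfc hh hC hηpos.le hC0 htail hτ)) hrd
  · -- second condition of LevitanNAP
    intro N hN ε hε
    set δ' : ℝ := ε / (2 * (2 * C + 1)) with hδ'def
    have hδ'pos : 0 < δ' := by positivity
    obtain ⟨R, hR, htail⟩ := stmt7_tail hh hδ'pos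
    set εf : ℝ := ε / (2 * (I + 1)) with hεfdef
    have hεfpos : 0 < εf := by positivity
    have hkey : εf * I + 2 * C * δ' ≤ ε := by
      have e1 : εf * (I + 1) = ε / 2 := by
        rw [hεfdef]; field_simp
      have e2 : δ' * (2 * C + 1) = ε / 2 := by
        rw [hδ'def]; field_simp
      nlinarith [hεfpos.le, hδ'pos.le]
    obtain ⟨ηf, hηf, E, hErd, hE1, hE2⟩ := hfap.2 (N + R) (by linarith) εf hεfpos
    refine ⟨ηf * I + 2 * C * δ' + 1, ?_, E, hErd, ?_, ?_⟩
    · have := mul_nonneg hηf.le hI0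
      have := mul_nonneg (mul_nonneg (by norm_num : (0:ℝ) ≤ 2) hC0) hδ'pos.le
      linarith
    · exact fun τ hτ => stmt7_APmono (by linarith)
        (stmt7_key hfc hh hC hηf.le hC0 htail (hE1 hτ))
    · intro a ha b hb
      obtain ⟨h1, h2⟩ := hE2 a ha b hb
      exact ⟨stmt7_APmono hkey (stmt7_key hfc hh hC hεfpos.le hC0 htail h1),
        stmt7_APmono hkey (stmt7_key hfc hh hC hεfpos.le hC0 htail h2)⟩
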